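/- Let C be a category with pullbacks equipped with a subcanonical Grothendieck topology J (i.e. every representable presheaf is a J-sheaf). Let g : X' → X be a morphism such that the sieve generated by {g} is a J-covering sieve of X, and write X'' = X' ×_X X' with the two projections p₁, p₂ : X'' → X'. Let f : Y → X and h : Z → X be morphisms, and suppose φ : X' ×_X Y ≅ X' ×_X Z is an isomorphism over X' whose two pullbacks to X'' agree: under the canonical isomorphisms X'' ×_{X'} (X' ×_X Y) ≅ X'' ×_X Y (for either projection pᵢ) and likewise for Z, the pullback of φ along p₁ equals the pullback of φ along p₂ as isomorphisms X'' ×_X Y ≅ X'' ×_X Z over X''. Then there exists an isomorphism Y ≅ Z over X. -/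

import Mathlib

universe v u

open CategoryTheory CategoryTheory.Limits

lemma descend_along_singleton
    {C : Type u} [Category.{v} C] (J : GrothendieckTopology C) [J.Subcanonical]
    {Y E W : C} (s : E ⟶ Y) (hs : Sieve.generate (Presieve.singleton s) ∈ J Y)
    (u : E ⟶ W)
    (hu : ∀ {V : C} (a b : V ⟶ E), a ≫ s = b ≫ s → a ≫ u = b ≫ u) :
    ∃! w : Y ⟶ W, s ≫ w = u := by
  have hsheaf : Presieve.IsSheaf J (yoneda.obj W) :=
    GrothendieckTopology.Subcanonical.isSheaf_of_isRepresentable _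
  have hfor : Presieve.IsSheafFor (yoneda.obj W) (Presieve.singleton s) := by
    rw [Presieve.isSheafFor_iff_generate]
    exact hsheaf _ hs
  let x : Presieve.FamilyOfElements (yoneda.obj W) (Presieve.singleton s) :=
    fun V k hk =>
      match V, k, hk with
      | _, _, Presieve.singleton.mk => u
  have hx : x.Compatible := by
    intro V₁ V₂ V g₁ g₂ f₁ f₂ h₁ h₂ hcomm
    cases h₁; cases h₂
    exact hu g₁ g₂ hcomm
  obtain ⟨t, ht, huniq⟩ := hfor x hx
  refine ⟨t, ht s Presieve.singleton.mk, ?_⟩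
  intro w hw
  refine huniq w ?_
  intro V k hk
  cases hk
  exact hw

lemma generate_singleton_pullback_mem
    {C : Type u} [Category.{v} C] [HasPullbacks C]
    (J : GrothendieckTopology C)
    {X X' Y : C} (g : X' ⟶ X)
    (hg : Sieve.generate (Presieve.singleton g) ∈ J X) (f : Y ⟶ X) :
    Sieve.generate (Presieve.singleton (pullback.snd g f)) ∈ J Y := by
  refine J.superset_covering ?_ (J.pullback_stable f hg)
  rintro V k ⟨T, l, g', hg', hl⟩
  cases hg'
  exact ⟨_, pullback.lift l k hl, _, Presieve.singleton.mk, pullback.lift_snd _ _ _⟩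


/-- Descent of objects along a cover in a subcanonical site.  Let `C` have
pullbacks and let `J` be a subcanonical Grothendieck topology on `C`.  Let `g : X' ⟶ X`
generate a `J`-covering sieve, and let `X'' = X' ×ₓ X'` with projections `p₁, p₂`.  Given
`f : Y ⟶ X`, `h : Z ⟶ X` and an isomorphism `φ : X' ×ₓ Y ≅ X' ×ₓ Z` over `X'` whose two
pullbacks to `X''` agree (equivalently, under the canonical identifications
`X'' ×_{X'} (X' ×ₓ Y) ≅ X'' ×ₓ Y`, the two induced maps `X'' ×ₓ Y ⟶ Z` agree),
there is an isomorphism `Y ≅ Z` over `X`. -/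
theorem descent_of_objects_subcanonical
    {C : Type u} [Category.{v} C] [HasPullbacks C]
    (J : GrothendieckTopology C) [J.Subcanonical]
    {X X' Y Z : C} (g : X' ⟶ X)
    (hg : Sieve.generate (Presieve.singleton g) ∈ J X)
    (f : Y ⟶ X) (h : Z ⟶ X)
    (φ : pullback g f ≅ pullback g h)
    (hφ : φ.hom ≫ pullback.fst g h = pullback.fst g f)
    (hcocycle :
      pullback.map (pullback.fst g g ≫ g) f g f (pullback.fst g g) (𝟙 Y) (𝟙 X)
          (by rw [Category.comp_id]) (by rw [Category.comp_id, Category.id_comp]) ≫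
        φ.hom ≫ pullback.snd g h =
      pullback.map (pullback.fst g g ≫ g) f g f (pullback.snd g g) (𝟙 Y) (𝟙 X)
          (by rw [Category.comp_id, pullback.condition])
          (by rw [Category.comp_id, Category.id_comp]) ≫
        φ.hom ≫ pullback.snd g h) :
    ∃ ψ : Y ≅ Z, ψ.hom ≫ h = f := by
  have hφ' : φ.inv ≫ pullback.fst g f = pullback.fst g h := by
    rw [← hφ, Iso.inv_hom_id_assoc]
  set p₁ := pullback.fst g g with hp₁
  set p₂ := pullback.snd g g with hp₂
  have hp : p₂ ≫ g = p₁ ≫ g := pullback.condition.symm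
  set mapY₁ : pullback (p₁ ≫ g) f ⟶ pullback g f :=
    pullback.map (p₁ ≫ g) f g f p₁ (𝟙 Y) (𝟙 X)
      (by rw [Category.comp_id]) (by rw [Category.comp_id, Category.id_comp]) with hmapY₁
  set mapY₂ : pullback (p₁ ≫ g) f ⟶ pullback g f :=
    pullback.map (p₁ ≫ g) f g f p₂ (𝟙 Y) (𝟙 X)
      (by rw [Category.comp_id, pullback.condition])
      (by rw [Category.comp_id, Category.id_comp]) with hmapY₂
  set mapZ₁ : pullback (p₁ ≫ g) h ⟶ pullback g h :=
    pullback.map (p₁ ≫ g) h g h p₁ (𝟙 Z) (𝟙 X)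
      (by rw [Category.comp_id]) (by rw [Category.comp_id, Category.id_comp]) with hmapZ₁
  set mapZ₂ : pullback (p₁ ≫ g) h ⟶ pullback g h :=
    pullback.map (p₁ ≫ g) h g h p₂ (𝟙 Z) (𝟙 X)
      (by rw [Category.comp_id, pullback.condition])
      (by rw [Category.comp_id, Category.id_comp]) with hmapZ₂
  have condΦ : ∀ (m : pullback (p₁ ≫ g) f ⟶ pullback g f) (p : pullback g g ⟶ X')
      (hm : m ≫ pullback.fst g f = pullback.fst (p₁ ≫ g) f ≫ p) (hpg : p ≫ g = p₁ ≫ g),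
      pullback.fst (p₁ ≫ g) f ≫ p₁ ≫ g = (m ≫ φ.hom ≫ pullback.snd g h) ≫ h := by
    intro m p hm hpg
    calc pullback.fst (p₁ ≫ g) f ≫ p₁ ≫ g
        = (pullback.fst (p₁ ≫ g) f ≫ p) ≫ g := by rw [Category.assoc, hpg]
      _ = (m ≫ pullback.fst g f) ≫ g := by rw [hm]
      _ = m ≫ (φ.hom ≫ pullback.fst g h) ≫ g := by rw [hφ, Category.assoc]
      _ = (m ≫ φ.hom ≫ pullback.snd g h) ≫ h := by
            simp only [Category.assoc, pullback.condition]
  have condΨ : ∀ (m : pullback (p₁ ≫ g) h ⟶ pullback g h) (p : pullback g g ⟶ X')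
      (hm : m ≫ pullback.fst g h = pullback.fst (p₁ ≫ g) h ≫ p) (hpg : p ≫ g = p₁ ≫ g),
      pullback.fst (p₁ ≫ g) h ≫ p₁ ≫ g = (m ≫ φ.inv ≫ pullback.snd g f) ≫ f := by
    intro m p hm hpg
    calc pullback.fst (p₁ ≫ g) h ≫ p₁ ≫ g
        = (pullback.fst (p₁ ≫ g) h ≫ p) ≫ g := by rw [Category.assoc, hpg]
      _ = (m ≫ pullback.fst g h) ≫ g := by rw [hm]
      _ = m ≫ (φ.inv ≫ pullback.fst g f) ≫ g := by rw [hφ', Category.assoc]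
      _ = (m ≫ φ.inv ≫ pullback.snd g f) ≫ f := by
            simp only [Category.assoc, pullback.condition]
  set Φ₁ : pullback (p₁ ≫ g) f ⟶ pullback (p₁ ≫ g) h :=
    pullback.lift (pullback.fst _ _) (mapY₁ ≫ φ.hom ≫ pullback.snd g h)
      (condΦ mapY₁ p₁ (by simp [pullback.lift_fst, pullback.lift_snd, pullback.lift_fst_assoc, pullback.lift_snd_assoc, hmapY₁]) rfl) with hΦ₁
  set Φ₂ : pullback (p₁ ≫ g) f ⟶ pullback (p₁ ≫ g) h :=
    pullback.lift (pullback.fst _ _) (mapY₂ ≫ φ.hom ≫ pullback.snd g h)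
      (condΦ mapY₂ p₂ (by simp [pullback.lift_fst, pullback.lift_snd, pullback.lift_fst_assoc, pullback.lift_snd_assoc, hmapY₂]) hp) with hΦ₂
  set Ψ₁ : pullback (p₁ ≫ g) h ⟶ pullback (p₁ ≫ g) f :=
    pullback.lift (pullback.fst _ _) (mapZ₁ ≫ φ.inv ≫ pullback.snd g f)
      (condΨ mapZ₁ p₁ (by simp [pullback.lift_fst, pullback.lift_snd, pullback.lift_fst_assoc, pullback.lift_snd_assoc, hmapZ₁]) rfl) with hΨ₁
  set Ψ₂ : pullback (p₁ ≫ g) h ⟶ pullback (p₁ ≫ g) f :=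
    pullback.lift (pullback.fst _ _) (mapZ₂ ≫ φ.inv ≫ pullback.snd g f)
      (condΨ mapZ₂ p₂ (by simp [pullback.lift_fst, pullback.lift_snd, pullback.lift_fst_assoc, pullback.lift_snd_assoc, hmapZ₂]) hp) with hΨ₂
  have hΦeq : Φ₁ = Φ₂ := by
    apply pullback.hom_ext
    · simp [pullback.lift_fst, pullback.lift_snd, pullback.lift_fst_assoc, pullback.lift_snd_assoc, hΦ₁, hΦ₂]
    · simpa [pullback.lift_fst, pullback.lift_snd, pullback.lift_fst_assoc, pullback.lift_snd_assoc, hΦ₁, hΦ₂] using hcocycle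
  -- Φᵢ ≫ mapZᵢ = mapYᵢ ≫ φ.hom
  have hΦmapZ₁ : Φ₁ ≫ mapZ₁ = mapY₁ ≫ φ.hom := by
    apply pullback.hom_ext
    · simp [pullback.lift_fst, pullback.lift_snd, pullback.lift_fst_assoc, pullback.lift_snd_assoc, hΦ₁, hmapZ₁, hmapY₁, hφ]
    · simp [pullback.lift_fst, pullback.lift_snd, pullback.lift_fst_assoc, pullback.lift_snd_assoc, hΦ₁, hmapZ₁]
  have hΦmapZ₂ : Φ₂ ≫ mapZ₂ = mapY₂ ≫ φ.hom := by
    apply pullback.hom_ext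
    · simp [pullback.lift_fst, pullback.lift_snd, pullback.lift_fst_assoc, pullback.lift_snd_assoc, hΦ₂, hmapZ₂, hmapY₂, hφ]
    · simp [pullback.lift_fst, pullback.lift_snd, pullback.lift_fst_assoc, pullback.lift_snd_assoc, hΦ₂, hmapZ₂]
  have hΨmapY₁ : Ψ₁ ≫ mapY₁ = mapZ₁ ≫ φ.inv := by
    apply pullback.hom_ext
    · simp [pullback.lift_fst, pullback.lift_snd, pullback.lift_fst_assoc, pullback.lift_snd_assoc, hΨ₁, hmapZ₁, hmapY₁, hφ']
    · simp [pullback.lift_fst, pullback.lift_snd, pullback.lift_fst_assoc, pullback.lift_snd_assoc, hΨ₁, hmapY₁]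
  have hΨmapY₂ : Ψ₂ ≫ mapY₂ = mapZ₂ ≫ φ.inv := by
    apply pullback.hom_ext
    · simp [pullback.lift_fst, pullback.lift_snd, pullback.lift_fst_assoc, pullback.lift_snd_assoc, hΨ₂, hmapZ₂, hmapY₂, hφ']
    · simp [pullback.lift_fst, pullback.lift_snd, pullback.lift_fst_assoc, pullback.lift_snd_assoc, hΨ₂, hmapY₂]
  have hΨΦ₁ : Ψ₁ ≫ Φ₁ = 𝟙 _ := by
    apply pullback.hom_ext
    · simp [pullback.lift_fst, pullback.lift_snd, pullback.lift_fst_assoc, pullback.lift_snd_assoc, hΨ₁, hΦ₁]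
    · rw [Category.assoc, hΦ₁, pullback.lift_snd, ← Category.assoc, hΨmapY₁]
      simp [pullback.lift_fst, pullback.lift_snd, pullback.lift_fst_assoc, pullback.lift_snd_assoc, hmapZ₁]
  have hΦΨ₂ : Φ₂ ≫ Ψ₂ = 𝟙 _ := by
    apply pullback.hom_ext
    · simp [pullback.lift_fst, pullback.lift_snd, pullback.lift_fst_assoc, pullback.lift_snd_assoc, hΨ₂, hΦ₂]
    · rw [Category.assoc, hΨ₂, pullback.lift_snd, ← Category.assoc, hΦmapZ₂]
      simp [pullback.lift_fst, pullback.lift_snd, pullback.lift_fst_assoc, pullback.lift_snd_assoc, hmapY₂]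
  have hΨeq : Ψ₁ = Ψ₂ := by
    calc Ψ₁ = Ψ₁ ≫ (Φ₂ ≫ Ψ₂) := by rw [hΦΨ₂, Category.comp_id]
      _ = (Ψ₁ ≫ Φ₁) ≫ Ψ₂ := by rw [← hΦeq, Category.assoc]
      _ = Ψ₂ := by rw [hΨΦ₁, Category.id_comp]
  have hcocycle' : mapZ₁ ≫ φ.inv ≫ pullback.snd g f = mapZ₂ ≫ φ.inv ≫ pullback.snd g f := by
    have h1 := congrArg (fun m => m ≫ pullback.snd (p₁ ≫ g) f) hΨeq
    simpa [pullback.lift_fst, pullback.lift_snd, pullback.lift_fst_assoc, pullback.lift_snd_assoc, hΨ₁, hΨ₂] using h1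
  -- pointwise cocycle conditions
  have huY : ∀ {V : C} (a b : V ⟶ pullback g f), a ≫ pullback.snd g f = b ≫ pullback.snd g f →
      a ≫ (φ.hom ≫ pullback.snd g h) = b ≫ (φ.hom ≫ pullback.snd g h) := by
    intro V a b hab
    have hcond : (pullback.lift (a ≫ pullback.fst g f) (b ≫ pullback.fst g f)
        (by rw [Category.assoc, Category.assoc, pullback.condition, ← Category.assoc, hab,
          Category.assoc, ← pullback.condition])) ≫ (p₁ ≫ g) =
        (a ≫ pullback.snd g f) ≫ f := by
      rw [← Category.assoc, pullback.lift_fst, Category.assoc, Category.assoc,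
        pullback.condition]
    set w : V ⟶ pullback (p₁ ≫ g) f := pullback.lift _ _ hcond with hw
    have hwa : w ≫ mapY₁ = a := by
      apply pullback.hom_ext
      · simp [pullback.lift_fst, pullback.lift_snd, pullback.lift_fst_assoc, pullback.lift_snd_assoc, hw, hmapY₁, hp₁, hp₂]
      · simp [pullback.lift_fst, pullback.lift_snd, pullback.lift_fst_assoc, pullback.lift_snd_assoc, hw, hmapY₁, hp₁, hp₂]
    have hwb : w ≫ mapY₂ = b := by
      apply pullback.hom_ext
      · simp [pullback.lift_fst, pullback.lift_snd, pullback.lift_fst_assoc, pullback.lift_snd_assoc, hw, hmapY₂, hp₁, hp₂]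
      · simp [pullback.lift_fst, pullback.lift_snd, pullback.lift_fst_assoc, pullback.lift_snd_assoc, hw, hmapY₂, hab, hp₁, hp₂]
    calc a ≫ φ.hom ≫ pullback.snd g h = w ≫ mapY₁ ≫ φ.hom ≫ pullback.snd g h := by
          rw [← hwa, Category.assoc]
      _ = w ≫ mapY₂ ≫ φ.hom ≫ pullback.snd g h := by rw [hcocycle]
      _ = b ≫ φ.hom ≫ pullback.snd g h := by rw [← Category.assoc, hwb]
  have huZ : ∀ {V : C} (a b : V ⟶ pullback g h), a ≫ pullback.snd g h = b ≫ pullback.snd g h →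
      a ≫ (φ.inv ≫ pullback.snd g f) = b ≫ (φ.inv ≫ pullback.snd g f) := by
    intro V a b hab
    have hcond : (pullback.lift (a ≫ pullback.fst g h) (b ≫ pullback.fst g h)
        (by rw [Category.assoc, Category.assoc, pullback.condition, ← Category.assoc, hab,
          Category.assoc, ← pullback.condition])) ≫ (p₁ ≫ g) =
        (a ≫ pullback.snd g h) ≫ h := by
      rw [← Category.assoc, pullback.lift_fst, Category.assoc, Category.assoc,
        pullback.condition]
    set w : V ⟶ pullback (p₁ ≫ g) h := pullback.lift _ _ hcond with hw
    have hwa : w ≫ mapZ₁ = a := by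
      apply pullback.hom_ext
      · simp [pullback.lift_fst, pullback.lift_snd, pullback.lift_fst_assoc, pullback.lift_snd_assoc, hw, hmapZ₁, hp₁, hp₂]
      · simp [pullback.lift_fst, pullback.lift_snd, pullback.lift_fst_assoc, pullback.lift_snd_assoc, hw, hmapZ₁, hp₁, hp₂]
    have hwb : w ≫ mapZ₂ = b := by
      apply pullback.hom_ext
      · simp [pullback.lift_fst, pullback.lift_snd, pullback.lift_fst_assoc, pullback.lift_snd_assoc, hw, hmapZ₂, hp₁, hp₂]
      · simp [pullback.lift_fst, pullback.lift_snd, pullback.lift_fst_assoc, pullback.lift_snd_assoc, hw, hmapZ₂, hab, hp₁, hp₂]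
    calc a ≫ φ.inv ≫ pullback.snd g f = w ≫ mapZ₁ ≫ φ.inv ≫ pullback.snd g f := by
          rw [← hwa, Category.assoc]
      _ = w ≫ mapZ₂ ≫ φ.inv ≫ pullback.snd g f := by rw [hcocycle']
      _ = b ≫ φ.inv ≫ pullback.snd g f := by rw [← Category.assoc, hwb]
  have hsY := generate_singleton_pullback_mem J g hg f
  have hsZ := generate_singleton_pullback_mem J g hg h
  -- separatedness
  have sepY : ∀ {W : C} (w₁ w₂ : Y ⟶ W),
      pullback.snd g f ≫ w₁ = pullback.snd g f ≫ w₂ → w₁ = w₂ := by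
    intro W w₁ w₂ hww
    obtain ⟨t, -, uniq⟩ := descend_along_singleton J (pullback.snd g f) hsY
      (pullback.snd g f ≫ w₁)
      (fun a b hab => by rw [← Category.assoc, hab, Category.assoc])
    exact (uniq w₁ rfl).trans (uniq w₂ hww.symm).symm
  have sepZ : ∀ {W : C} (w₁ w₂ : Z ⟶ W),
      pullback.snd g h ≫ w₁ = pullback.snd g h ≫ w₂ → w₁ = w₂ := by
    intro W w₁ w₂ hww
    obtain ⟨t, -, uniq⟩ := descend_along_singleton J (pullback.snd g h) hsZ
      (pullback.snd g h ≫ w₁)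
      (fun a b hab => by rw [← Category.assoc, hab, Category.assoc])
    exact (uniq w₁ rfl).trans (uniq w₂ hww.symm).symm
  -- descend the two morphisms
  obtain ⟨ψh, hψh, -⟩ := descend_along_singleton J (pullback.snd g f) hsY
    (φ.hom ≫ pullback.snd g h) huY
  obtain ⟨ψi, hψi, -⟩ := descend_along_singleton J (pullback.snd g h) hsZ
    (φ.inv ≫ pullback.snd g f) huZ
  have hψhi : ψh ≫ ψi = 𝟙 Y := by
    apply sepY
    rw [← Category.assoc, hψh, Category.assoc, hψi, Iso.hom_inv_id_assoc, Category.comp_id]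
  have hψih : ψi ≫ ψh = 𝟙 Z := by
    apply sepZ
    rw [← Category.assoc, hψi, Category.assoc, hψh, Iso.inv_hom_id_assoc, Category.comp_id]
  refine ⟨⟨ψh, ψi, hψhi, hψih⟩, ?_⟩
  apply sepY
  rw [← Category.assoc, hψh, Category.assoc, ← pullback.condition, ← Category.assoc, hφ,
    pullback.condition]
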